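/- Let n ≥ 1, let V be a finite-dimensional complex vector space, and let ρ : SL(2,ℤ) → GL(V) be a group homomorphism whose kernel contains the principal congruence subgroup Γ(n). Let W be a nonzero ρ-invariant subspace, let m be the multiplicative order of the restriction of ρ(T) to W (so m divides n), and suppose that: (i) dim W = φ₂(m), the number of squares in (ℤ/mℤ)ˣ, and (ii) the set of eigenvalues of ρ(T) restricted to W equals {ζ^{a²} : a an integer coprime to m} for some primitive m-th root of unity ζ. Then W is irreducible: the only ρ-invariant subspaces of W are 0 and W itself. -/

import Mathlib

namespace SL2IrredAux

open Matrix

variable {R : Type*} [CommRing R]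

/-- Upper elementary matrix in `SL₂`. -/
def E12 (R : Type*) [CommRing R] (x : R) : Matrix.SpecialLinearGroup (Fin 2) R :=
  ⟨!![1, x; 0, 1], by simp [Matrix.det_fin_two_of]⟩

/-- Lower elementary matrix in `SL₂`. -/
def E21 (R : Type*) [CommRing R] (x : R) : Matrix.SpecialLinearGroup (Fin 2) R :=
  ⟨!![1, 0; x, 1], by simp [Matrix.det_fin_two_of]⟩

/-- Diagonal matrix in `SL₂` attached to a unit. -/
def Dm {R : Type*} [CommRing R] (u : Rˣ) : Matrix.SpecialLinearGroup (Fin 2) R :=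
  ⟨!![(u : R), 0; 0, ((u⁻¹ : Rˣ) : R)], by simp [Matrix.det_fin_two_of]⟩

@[simp] lemma E12_coe (x : R) : ((E12 R x : Matrix.SpecialLinearGroup (Fin 2) R) : Matrix (Fin 2) (Fin 2) R) = !![1, x; 0, 1] := rfl

@[simp] lemma E21_coe (x : R) : ((E21 R x : Matrix.SpecialLinearGroup (Fin 2) R) : Matrix (Fin 2) (Fin 2) R) = !![1, 0; x, 1] := rfl

@[simp] lemma Dm_coe (u : Rˣ) : ((Dm u : Matrix.SpecialLinearGroup (Fin 2) R) : Matrix (Fin 2) (Fin 2) R) = !![(u : R), 0; 0, ((u⁻¹ : Rˣ) : R)] := rfl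

lemma E12_mul (x y : R) : E12 R x * E12 R y = E12 R (x + y) := by
  apply Subtype.ext
  simp [E12_coe, Matrix.mul_fin_two, add_comm, Matrix.SpecialLinearGroup.coe_mul]

lemma E12_zero : E12 R 0 = 1 := by
  apply Subtype.ext
  simp [E12, Matrix.one_fin_two]

lemma E12_pow (k : ℕ) : (E12 R 1) ^ k = E12 R (k : R) := by
  induction k with
  | zero => simp [E12_zero]
  | succ k ih => rw [pow_succ, ih, E12_mul]; push_cast; ring_nf

lemma E12_map {S : Type*} [CommRing S] (f : R →+* S) (x : R) :
    Matrix.SpecialLinearGroup.map f (E12 R x) = E12 S (f x) := by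
  apply Subtype.ext
  ext i j
  fin_cases i <;> fin_cases j <;>
    simp [E12_coe, Matrix.SpecialLinearGroup.map_apply_coe, Matrix.map_apply]

lemma E21_map {S : Type*} [CommRing S] (f : R →+* S) (x : R) :
    Matrix.SpecialLinearGroup.map f (E21 R x) = E21 S (f x) := by
  apply Subtype.ext
  ext i j
  fin_cases i <;> fin_cases j <;>
    simp [E21_coe, Matrix.SpecialLinearGroup.map_apply_coe, Matrix.map_apply]

lemma whitehead (u : Rˣ) :
    E12 R (u : R) * E21 R (-((u⁻¹ : Rˣ) : R)) * E12 R (u : R) * E12 R (-1) * E21 R 1 *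
      E12 R (-1) = Dm u := by
  have h : (u : R) * ((u⁻¹ : Rˣ) : R) = 1 := u.mul_inv
  apply Subtype.ext
  ext i j
  fin_cases i <;> fin_cases j <;>
    · simp [E12_coe, E21_coe, Dm_coe, Matrix.mul_fin_two, Matrix.SpecialLinearGroup.coe_mul]
      try linear_combination (2 - (u:R) * ((u⁻¹:Rˣ):R)) * h

lemma TD (u : Rˣ) :
    E12 R 1 * Dm u = Dm u * E12 R (((u⁻¹ : Rˣ) : R) ^ 2) := by
  have h : (u : R) * ((u⁻¹ : Rˣ) : R) = 1 := u.mul_inv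
  apply Subtype.ext
  ext i j
  fin_cases i <;> fin_cases j <;>
    · simp [E12_coe, Dm_coe, Matrix.mul_fin_two, Matrix.SpecialLinearGroup.coe_mul]
      try linear_combination (-((u⁻¹:Rˣ):R)) * h


end SL2IrredAux

open SL2IrredAux


/-- `phi2 m` is the number of squares in the unit group `(ℤ/mℤ)ˣ`. -/
noncomputable def phi2 (m : ℕ) : ℕ := Nat.card (Set.range fun a : (ZMod m)ˣ => a ^ 2)

/-- A minimal subrepresentation of a congruence representation of `SL(2,ℤ)`
is irreducible: if `W` is a nonzero invariant subspace on which `ρ(T)` has order `m`,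
`dim W = φ₂(m)`, and the eigenvalues of `ρ(T)` on `W` are exactly `{ζ^(a²) : gcd(a,m)=1}` for
some primitive `m`-th root of unity `ζ`, then the only invariant subspaces of `W` are `0`
and `W`. -/
theorem minimal_subrepresentation_irreducible
    (n : ℕ) (hn : 1 ≤ n) (V : Type*) [AddCommGroup V] [Module ℂ V] [FiniteDimensional ℂ V]
    (ρ : Matrix.SpecialLinearGroup (Fin 2) ℤ →* (V →ₗ[ℂ] V)ˣ)
    (hker : CongruenceSubgroup.Gamma n ≤ ρ.ker)
    (W : Submodule ℂ V) (hWne : W ≠ ⊥)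
    (hW : ∀ g : Matrix.SpecialLinearGroup (Fin 2) ℤ, ∀ x ∈ W, (ρ g : V →ₗ[ℂ] V) x ∈ W)
    (hWT : ∀ x ∈ W, (ρ ModularGroup.T : V →ₗ[ℂ] V) x ∈ W)
    (m : ℕ)
    (hm : m = orderOf ((ρ ModularGroup.T : V →ₗ[ℂ] V).restrict hWT : Module.End ℂ W))
    (hdim : Module.finrank ℂ W = phi2 m)
    (ζ : ℂ) (hζ : IsPrimitiveRoot ζ m)
    (hspec : {μ : ℂ | ∃ x ∈ W, x ≠ 0 ∧ (ρ ModularGroup.T : V →ₗ[ℂ] V) x = μ • x}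
      = {μ : ℂ | ∃ a : ℤ, IsCoprime a (m : ℤ) ∧ μ = ζ ^ (a ^ 2)}) :
    ∀ U : Submodule ℂ V, U ≤ W →
      (∀ g : Matrix.SpecialLinearGroup (Fin 2) ℤ, ∀ x ∈ U, (ρ g : V →ₗ[ℂ] V) x ∈ U) →
      U = ⊥ ∨ U = W := by
  intro U hUW hU
  by_cases hUbot : U = ⊥
  · exact Or.inl hUbot
  right
  haveI : NeZero n := ⟨by omega⟩
  set Tρ : Module.End ℂ V := (ρ ModularGroup.T : V →ₗ[ℂ] V) with hTρ
  -- `T` is an elementary matrix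
  have hTE : ModularGroup.T = E12 ℤ 1 := Subtype.ext (by rw [ModularGroup.coe_T]; rfl)
  -- the reduction homomorphism
  set red := Matrix.SpecialLinearGroup.map (n := Fin 2) (Int.castRingHom (ZMod n)) with hred
  -- key conjugation relation
  have hconj : ∀ u : (ZMod n)ˣ, ∃ (γ : Matrix.SpecialLinearGroup (Fin 2) ℤ) (k : ℕ),
      ((k : ZMod n) = ((u⁻¹ : (ZMod n)ˣ) : ZMod n) ^ 2) ∧
      ρ ModularGroup.T * ρ γ = ρ γ * ρ ModularGroup.T ^ k := by
    intro u
    set b : ZMod n := ((u⁻¹ : (ZMod n)ˣ) : ZMod n) with hb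
    obtain ⟨γ, hredγ⟩ : ∃ γ, red γ = Dm u := by
      refine ⟨E12 ℤ ((u : ZMod n).val : ℤ) * E21 ℤ (((-b).val : ℤ)) *
        E12 ℤ ((u : ZMod n).val : ℤ) * E12 ℤ (-1) * E21 ℤ 1 * E12 ℤ (-1), ?_⟩
      simp only [hred, map_mul, E12_map, E21_map, map_neg, map_one, map_intCast,
        Int.coe_castRingHom]
      have h1 : ((((u : ZMod n).val : ℤ) : ZMod n)) = (u : ZMod n) := by
        push_cast [ZMod.natCast_val, ZMod.cast_id]; rfl
      have h2 : ((((-b).val : ℤ) : ZMod n)) = -b := by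
        push_cast [ZMod.natCast_val, ZMod.cast_id]; rfl
      rw [h1, h2, hb]
      exact whitehead u
    obtain ⟨k, hk⟩ : ∃ k : ℕ, ((k : ZMod n)) = b ^ 2 :=
      ⟨(b ^ 2).val, by simp [ZMod.natCast_val, ZMod.cast_id]⟩
    refine ⟨γ, k, hk, ?_⟩
    have hmemγ : ((γ * ModularGroup.T ^ k)⁻¹ * (ModularGroup.T * γ)) ∈
        CongruenceSubgroup.Gamma n := by
      rw [CongruenceSubgroup.Gamma_mem']
      show red ((γ * ModularGroup.T ^ k)⁻¹ * (ModularGroup.T * γ)) = 1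
      have hredT : red ModularGroup.T = E12 (ZMod n) 1 := by
        rw [hTE, hred, E12_map]; norm_num
      rw [map_mul, map_inv, map_mul, map_mul, map_pow, hredγ, hredT, E12_pow, hk, hb, ← TD]
      group
    have hk1 := hker hmemγ
    rw [MonoidHom.mem_ker, map_mul, map_inv, inv_mul_eq_one, map_mul, map_mul, map_pow] at hk1
    exact hk1.symm
  -- ρ(T)^n = 1 on V
  have hTn : ModularGroup.T ^ n ∈ CongruenceSubgroup.Gamma n := by
    rw [CongruenceSubgroup.Gamma_mem']
    rw [hTE, map_pow, E12_map, map_one, E12_pow]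
    simp [E12_zero]
  have hρTn : ρ ModularGroup.T ^ n = 1 := by
    rw [← map_pow]; exact hker hTn
  have hTρn : ∀ v : V, (Tρ ^ n) v = v := by
    intro v
    have : (Tρ ^ n) = (((ρ ModularGroup.T ^ n : (V →ₗ[ℂ] V)ˣ)) : V →ₗ[ℂ] V) := by
      rw [Units.val_pow_eq_pow_val]
    rw [this, hρTn]
    rfl
  -- m divides n, m positive
  have hfn : (Tρ.restrict hWT) ^ n = 1 := by
    rw [Module.End.pow_restrict]
    ext x
    simp only [LinearMap.restrict_coe_apply, hTρn, Module.End.one_apply]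
  have hmn : m ∣ n := hm ▸ orderOf_dvd_of_pow_eq_one hfn
  have hm0 : m ≠ 0 := by
    rintro rfl
    rw [zero_dvd_iff] at hmn
    omega
  haveI : NeZero m := ⟨hm0⟩
  have hζ0 : ζ ≠ 0 := hζ.ne_zero hm0
  -- primitive root congruence
  have zcongr : ∀ j l : ℤ, ((j : ZMod m) = (l : ZMod m)) → ζ ^ j = ζ ^ l := by
    intro j l h
    have h0 : (((j - l : ℤ)) : ZMod m) = 0 := by push_cast [h]; ring
    have hd : (m : ℤ) ∣ j - l := (ZMod.intCast_zmod_eq_zero_iff_dvd _ _).1 h0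
    have h1 : ζ ^ (j - l) = 1 := (hζ.zpow_eq_one_iff_dvd _).2 hd
    calc ζ ^ j = ζ ^ (l + (j - l)) := by ring_nf
    _ = ζ ^ l * ζ ^ (j - l) := zpow_add₀ hζ0 _ _
    _ = ζ ^ l := by rw [h1, mul_one]
  -- eigenvalue function indexed by units
  set Ev : (ZMod m)ˣ → ℂ := fun t => ζ ^ ((t : ZMod m).val) with hEv
  have hEvinj : Function.Injective Ev := by
    intro t t' h
    have hv : (t : ZMod m).val = (t' : ZMod m).val :=
      hζ.pow_inj (ZMod.val_lt _) (ZMod.val_lt _) h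
    have : (t : ZMod m) = (t' : ZMod m) := by
      have := congrArg (fun j : ℕ => (j : ZMod m)) hv
      simpa [ZMod.natCast_val, ZMod.cast_id] using this
    exact Units.ext this
  have hEvz : ∀ (j : ℤ) (t : (ZMod m)ˣ), ((j : ZMod m) = (t : ZMod m)) → ζ ^ j = Ev t := by
    intro j t h
    have h2 : ((((t : ZMod m).val : ℤ)) : ZMod m) = ((t : ZMod m)) := by
      push_cast [ZMod.natCast_val, ZMod.cast_id]; rfl
    have := zcongr j (((t : ZMod m).val : ℤ)) (by rw [h, h2])
    rw [this, hEv]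
    exact zpow_natCast ζ _
  -- existence of one eigenvector in U
  haveI : Nontrivial U := Submodule.nontrivial_iff_ne_bot.2 hUbot
  obtain ⟨μ, hμ⟩ := Module.End.exists_eigenvalue
    (Tρ.restrict (fun x hx => hU ModularGroup.T x hx))
  obtain ⟨v, hv⟩ := hμ.exists_hasEigenvector
  have hx₀U : (v : V) ∈ U := v.2
  have hx₀ne : (v : V) ≠ 0 := fun h => hv.right (Subtype.ext h)
  have hvx : Tρ (v : V) = μ • (v : V) := by
    have h1 := hv.apply_eq_smul
    have h2 : (Tρ.restrict (fun x hx => hU ModularGroup.T x hx) v : V) = Tρ (v : V) :=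
      LinearMap.restrict_coe_apply _ _ _
    rw [← h2, h1]
    rfl
  have hμmem : μ ∈ {μ : ℂ | ∃ a : ℤ, IsCoprime a (m : ℤ) ∧ μ = ζ ^ (a ^ 2)} := by
    rw [← hspec]
    exact ⟨(v : V), hUW hx₀U, hx₀ne, hvx⟩
  obtain ⟨a, ha, hμa⟩ := hμmem
  -- (a : ZMod m) is a unit
  obtain ⟨p, q, hpq⟩ := ha
  have hua : IsUnit ((a : ℤ) : ZMod m) := by
    apply IsUnit.of_mul_eq_one ((p : ℤ) : ZMod m)
    have := congrArg (fun z : ℤ => ((z : ZMod m))) hpq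
    push_cast at this
    simpa [ZMod.natCast_self, mul_comm] using this
  set ua : (ZMod m)ˣ := hua.unit with hual
  have huac : (ua : ZMod m) = ((a : ℤ) : ZMod m) := hua.unit_spec
  -- for every unit b, U contains an eigenvector with eigenvalue Ev (b^2)
  have key : ∀ b : (ZMod m)ˣ, ∃ y : V, y ∈ U ∧ y ≠ 0 ∧ Tρ y = Ev (b ^ 2) • y := by
    intro b
    obtain ⟨u, hu⟩ := ZMod.unitsMap_surjective hmn (ua * b⁻¹)
    obtain ⟨γ, k, hk, hrel⟩ := hconj u
    refine ⟨(ρ γ : V →ₗ[ℂ] V) (v : V), hU γ _ hx₀U, ?_, ?_⟩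
    · intro h0
      apply hx₀ne
      have : (((ρ γ)⁻¹ : (V →ₗ[ℂ] V)ˣ) : V →ₗ[ℂ] V) ((ρ γ : V →ₗ[ℂ] V) (v : V)) = (v : V) := by
        rw [← Module.End.mul_apply, ← Units.val_mul, inv_mul_cancel]
        rfl
      rw [h0, map_zero] at this
      exact this.symm
    · have happ := congrArg (fun w : (V →ₗ[ℂ] V)ˣ => (w : V →ₗ[ℂ] V) (v : V)) hrel
      simp only [Units.val_mul, Units.val_pow_eq_pow_val, Module.End.mul_apply] at happ
      have hpow : ∀ j : ℕ, (Tρ ^ j) (v : V) = μ ^ j • (v : V) := by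
        intro j
        induction j with
        | zero => simp
        | succ j ih =>
          rw [pow_succ, Module.End.mul_apply, hvx, map_smul, ih, smul_smul, pow_succ]
          ring_nf
      rw [hpow k] at happ
      rw [happ, map_smul]
      congr 1
      -- μ ^ k = Ev (b ^ 2)
      rw [hμa, ← zpow_natCast (ζ ^ (a ^ 2)) k, ← zpow_mul]
      apply hEvz
      push_cast
      have hkm : ((k : ZMod m)) = ((ua * b⁻¹)⁻¹ : (ZMod m)ˣ) ^ 2 := by
        have h1 : ((k : ZMod m)) = ZMod.castHom hmn (ZMod m) ((k : ZMod n)) :=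
          (map_natCast (ZMod.castHom hmn (ZMod m)) k).symm
        rw [h1, hk, map_pow]
        have h2 : ZMod.castHom hmn (ZMod m) ((u⁻¹ : (ZMod n)ˣ) : ZMod n)
            = ((ZMod.unitsMap hmn u⁻¹ : (ZMod m)ˣ) : ZMod m) := by
          rw [ZMod.unitsMap_def]
          rfl
        rw [h2, map_inv, hu]
      rw [hkm]
      have : ((a : ZMod m)) ^ 2 * (((ua * b⁻¹)⁻¹ : (ZMod m)ˣ) : ZMod m) ^ 2
          = ((b : ZMod m)) ^ 2 := by
        rw [← huac]
        have hb2 : (ua ^ 2 * ((ua * b⁻¹)⁻¹) ^ 2 : (ZMod m)ˣ) = b ^ 2 := by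
          rw [mul_inv, inv_inv, mul_pow, ← mul_assoc, ← mul_pow, mul_inv_cancel,
            one_pow, one_mul]
        have := congrArg (fun t : (ZMod m)ˣ => (t : ZMod m)) hb2
        push_cast at this
        convert this using 1
      rw [this]
  -- assemble a linearly independent family of eigenvectors inside U
  set Sq : Set (ZMod m)ˣ := Set.range (fun a : (ZMod m)ˣ => a ^ 2) with hSq
  have hall : ∀ s : ↥Sq, ∃ y : V, y ∈ U ∧ y ≠ 0 ∧ Tρ y = Ev (s : (ZMod m)ˣ) • y := by
    rintro ⟨s, b, rfl⟩
    exact key b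
  choose y hyU hyne hyeig using hall
  have li : LinearIndependent ℂ y := by
    apply Tρ.eigenvectors_linearIndependent' (fun s : ↥Sq => Ev (s : (ZMod m)ˣ))
      (hEvinj.comp Subtype.val_injective) y
    intro s
    exact ⟨Module.End.mem_eigenspace_iff.2 (hyeig s), hyne s⟩
  set y' : ↥Sq → U := fun s => ⟨y s, hyU s⟩ with hy'
  have li' : LinearIndependent ℂ y' := by
    apply LinearIndependent.of_comp U.subtype
    exact li
  haveI : Fintype ↥Sq := Fintype.ofFinite _
  have hcard : Fintype.card ↥Sq = phi2 m := by
    rw [phi2, Nat.card_eq_fintype_card]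
  have hle : phi2 m ≤ Module.finrank ℂ U := hcard ▸ li'.fintype_card_le_finrank
  exact Submodule.eq_of_le_of_finrank_le hUW (le_trans (le_of_eq hdim) hle)
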